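/- Let g : ℝ → ℝ be continuous and 2π-periodic, and let v : ℝ → ℝ be differentiable and 2π-periodic with −2·v′(x) + v(x) + g(x) = 0 for all x ∈ ℝ. Then v(x) = −∫_{−∞}^0 e^s · g(x − 2s) ds for every x ∈ ℝ. -/

import Mathlib

open MeasureTheory

/-- Representation formula from Remark 2.2: the unique `2π`-periodic solution
of `−2v′ + v + g = 0` is given by integrating the data along the horizon
generators with exponential weight. -/
theorem stmt14 (g v : ℝ → ℝ)
    (hg : Continuous g) (hgp : Function.Periodic g (2 * Real.pi))
    (hv : Differentiable ℝ v) (hvp : Function.Periodic v (2 * Real.pi))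
    (heq : ∀ x : ℝ, -2 * deriv v x + v x + g x = 0) :
    ∀ x : ℝ, v x = -∫ s in Set.Iic (0:ℝ), Real.exp s * g (x - 2 * s) := by
  intro x
  set f : ℝ → ℝ := fun s => Real.exp s * g (x - 2 * s) with hf
  have hπ : (0:ℝ) < 2 * Real.pi := by positivity
  -- bound for g
  obtain ⟨Cg, hCg⟩ : ∃ C, ∀ y, |g y| ≤ C := by
    obtain ⟨C, hC⟩ := (isCompact_Icc (a := (0:ℝ)) (b := 2 * Real.pi)).exists_bound_of_continuousOn
      hg.continuousOn
    refine ⟨C, fun y => ?_⟩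
    obtain ⟨z, hz, hzy⟩ := hgp.exists_mem_Ico₀ hπ y
    simpa [hzy] using hC z ⟨hz.1, hz.2.le⟩
  -- bound for v
  obtain ⟨Cv, hCv⟩ : ∃ C, ∀ y, |v y| ≤ C := by
    obtain ⟨C, hC⟩ := (isCompact_Icc (a := (0:ℝ)) (b := 2 * Real.pi)).exists_bound_of_continuousOn
      hv.continuous.continuousOn
    refine ⟨C, fun y => ?_⟩
    obtain ⟨z, hz, hzy⟩ := hvp.exists_mem_Ico₀ hπ y
    simpa [hzy] using hC z ⟨hz.1, hz.2.le⟩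
  have hfc : Continuous f := Real.continuous_exp.mul (hg.comp (by continuity))
  -- integrability of f on Iic 0
  have hfi : IntegrableOn f (Set.Iic (0:ℝ)) := by
    refine (integrableOn_exp_Iic 0).const_mul Cg |>.mono' hfc.aestronglyMeasurable ?_
    filter_upwards with s
    have : |f s| ≤ Real.exp s * Cg := by
      rw [abs_mul, abs_of_pos (Real.exp_pos s)]
      exact mul_le_mul_of_nonneg_left (hCg _) (Real.exp_pos s).le
    simpa [Real.norm_eq_abs, mul_comm] using this
  -- φ and its derivative
  set φ : ℝ → ℝ := fun s => Real.exp s * v (x - 2 * s) with hφ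
  have hφd : ∀ s, HasDerivAt φ (-f s) s := by
    intro s
    have h1 : HasDerivAt (fun s : ℝ => v (x - 2 * s)) (deriv v (x - 2 * s) * (-2)) s := by
      have : HasDerivAt (fun s : ℝ => x - 2 * s) (-2) s := by
        simpa using ((hasDerivAt_id s).const_mul (2:ℝ)).const_sub x
      exact (hv (x - 2 * s)).hasDerivAt.comp s this
    have h2 := ((Real.hasDerivAt_exp s).mul h1)
    convert h2 using 1
    · rfl
    · rfl
    · rfl
    have h3 : v (x - 2 * s) + deriv v (x - 2 * s) * (-2) = -g (x - 2 * s) := by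
      linarith [heq (x - 2 * s)]
    have : -f s = Real.exp s * (-(g (x - 2 * s))) := by simp [hf]
    rw [this, ← h3]; ring
  -- on finite intervals
  have key : ∀ a : ℝ, (∫ s in a..(0:ℝ), f s) = φ a - v x := by
    intro a
    have := intervalIntegral.integral_eq_sub_of_hasDerivAt
      (f := φ) (f' := fun s => -f s) (a := a) (b := 0)
      (fun t _ => hφd t) ((hfc.neg).intervalIntegrable a 0)
    have h0 : φ 0 = v x := by simp [hφ]
    have : (∫ s in a..(0:ℝ), -f s) = v x - φ a := by rw [this, h0]
    rw [intervalIntegral.integral_neg] at this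
    linarith
  -- two limits
  have hlim1 : Filter.Tendsto (fun a : ℝ => ∫ s in a..(0:ℝ), f s) Filter.atBot
      (nhds (∫ s in Set.Iic (0:ℝ), f s)) :=
    intervalIntegral_tendsto_integral_Iic 0 hfi Filter.tendsto_id
  have hφ0 : Filter.Tendsto φ Filter.atBot (nhds 0) := by
    have hb : ∀ a : ℝ, |φ a| ≤ Real.exp a * Cv := by
      intro a
      rw [hφ]; dsimp only
      rw [abs_mul, abs_of_pos (Real.exp_pos a)]
      exact mul_le_mul_of_nonneg_left (hCv _) (Real.exp_pos a).le
    have h1 : Filter.Tendsto (fun a : ℝ => Real.exp a * Cv) Filter.atBot (nhds 0) := by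
      simpa using Real.tendsto_exp_atBot.mul_const Cv
    refine squeeze_zero_norm (fun a => ?_) h1
    simpa [Real.norm_eq_abs] using hb a
  have hlim2 : Filter.Tendsto (fun a : ℝ => ∫ s in a..(0:ℝ), f s) Filter.atBot
      (nhds (0 - v x)) := by
    simp only [key]
    exact hφ0.sub_const (v x)
  have := tendsto_nhds_unique hlim1 hlim2
  rw [this]; ring
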